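/- Every eigenvalue of the 8×8 real matrix H = [[1,1,1,1,-1,-1,-1,-1],[-1,1,1,-1,-1,1,1,-1],[-1,-1,1,1,1,1,-1,-1],[1,-1,1,-1,1,-1,1,-1],[1,-1,1,-1,-1,1,-1,1],[-1,-1,1,1,-1,-1,1,1],[-1,1,1,-1,1,-1,-1,1],[1,1,1,1,1,1,1,1]] is a primitive 16-th root of unity times √8; equivalently, H is a real Hadamard matrix of order 8 and the characteristic polynomial of 8^{-1/2}·H is x^8 + 1. -/

import Mathlib

/-- A real Hadamard matrix: entries in `{±1}` and `H * Hᵀ = n • 1`. -/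
def IsHadamard {ι : Type*} [Fintype ι] [DecidableEq ι] (H : Matrix ι ι ℝ) : Prop :=
  (∀ i j, H i j = 1 ∨ H i j = -1) ∧ H * H.transpose = (Fintype.card ι : ℝ) • 1

open Polynomial

def Z : Matrix (Fin 8) (Fin 8) ℤ :=
  !![1, 1, 1, 1, -1, -1, -1, -1;
     -1, 1, 1, -1, -1, 1, 1, -1;
     -1, -1, 1, 1, 1, 1, -1, -1;
     1, -1, 1, -1, 1, -1, 1, -1;
     1, -1, 1, -1, -1, 1, -1, 1;
     -1, -1, 1, 1, -1, -1, 1, 1;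
     -1, 1, 1, -1, 1, -1, -1, 1;
     1, 1, 1, 1, 1, 1, 1, 1]

def Z2 : Matrix (Fin 8) (Fin 8) ℤ :=
  !![0, 0, 0, 0, 0, 0, 0, -8;
     -8, 0, 0, 0, 0, 0, 0, 0;
     0, -8, 0, 0, 0, 0, 0, 0;
     0, 0, 0, 0, 0, 0, -8, 0;
     0, 0, 0, 8, 0, 0, 0, 0;
     0, 0, 0, 0, 8, 0, 0, 0;
     0, 0, 0, 0, 0, 8, 0, 0;
     0, 0, 8, 0, 0, 0, 0, 0]

def Z3 : Matrix (Fin 8) (Fin 8) ℤ :=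
  !![-8, -8, -8, -8, -8, -8, -8, -8;
     -8, -8, -8, -8, 8, 8, 8, 8;
     8, -8, -8, 8, 8, -8, -8, 8;
     8, -8, -8, 8, -8, 8, 8, -8;
     8, -8, 8, -8, 8, -8, 8, -8;
     8, -8, 8, -8, -8, 8, -8, 8;
     -8, -8, 8, 8, -8, -8, 8, 8;
     -8, -8, 8, 8, 8, 8, -8, -8]

def Z4 : Matrix (Fin 8) (Fin 8) ℤ :=
  !![0, 0, -64, 0, 0, 0, 0, 0;
     0, 0, 0, 0, 0, 0, 0, 64;
     64, 0, 0, 0, 0, 0, 0, 0;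
     0, 0, 0, 0, 0, -64, 0, 0;
     0, 0, 0, 0, 0, 0, -64, 0;
     0, 0, 0, 64, 0, 0, 0, 0;
     0, 0, 0, 0, 64, 0, 0, 0;
     0, -64, 0, 0, 0, 0, 0, 0]

def Z5 : Matrix (Fin 8) (Fin 8) ℤ :=
  !![64, 64, -64, -64, -64, -64, 64, 64;
     64, 64, 64, 64, 64, 64, 64, 64;
     64, 64, 64, 64, -64, -64, -64, -64;
     64, 64, -64, -64, 64, 64, -64, -64;
     64, -64, -64, 64, -64, 64, 64, -64;
     64, -64, 64, -64, 64, -64, 64, -64;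
     64, -64, 64, -64, -64, 64, -64, 64;
     64, -64, -64, 64, 64, -64, -64, 64]

def Z6 : Matrix (Fin 8) (Fin 8) ℤ :=
  !![0, 512, 0, 0, 0, 0, 0, 0;
     0, 0, 512, 0, 0, 0, 0, 0;
     0, 0, 0, 0, 0, 0, 0, -512;
     0, 0, 0, 0, -512, 0, 0, 0;
     0, 0, 0, 0, 0, -512, 0, 0;
     0, 0, 0, 0, 0, 0, -512, 0;
     0, 0, 0, 512, 0, 0, 0, 0;
     512, 0, 0, 0, 0, 0, 0, 0]

def Z7 : Matrix (Fin 8) (Fin 8) ℤ :=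
  !![-512, 512, 512, -512, -512, 512, 512, -512;
     -512, -512, 512, 512, 512, 512, -512, -512;
     -512, -512, -512, -512, -512, -512, -512, -512;
     -512, 512, -512, 512, 512, -512, 512, -512;
     512, 512, -512, -512, 512, 512, -512, -512;
     512, -512, -512, 512, -512, 512, 512, -512;
     512, -512, 512, -512, 512, -512, 512, -512;
     512, 512, 512, 512, -512, -512, -512, -512]

def Z8 : Matrix (Fin 8) (Fin 8) ℤ :=
  !![-4096, 0, 0, 0, 0, 0, 0, 0;
     0, -4096, 0, 0, 0, 0, 0, 0;
     0, 0, -4096, 0, 0, 0, 0, 0;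
     0, 0, 0, -4096, 0, 0, 0, 0;
     0, 0, 0, 0, -4096, 0, 0, 0;
     0, 0, 0, 0, 0, -4096, 0, 0;
     0, 0, 0, 0, 0, 0, -4096, 0;
     0, 0, 0, 0, 0, 0, 0, -4096]

lemma hz2 : Z * Z = Z2 := by decide
lemma hz3 : Z2 * Z = Z3 := by decide
lemma hz4 : Z2 * Z2 = Z4 := by decide
lemma hz5 : Z4 * Z = Z5 := by decide
lemma hz6 : Z4 * Z2 = Z6 := by decide
lemma hz7 : Z6 * Z = Z7 := by decide
lemma hz8 : Z4 * Z4 = Z8 := by decide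
lemma hzt : Z * Z.transpose = Matrix.diagonal (fun _ => (8:ℤ)) := by decide

lemma zpow2 : Z ^ 2 = Z2 := by rw [pow_two, hz2]
lemma zpow3 : Z ^ 3 = Z3 := by rw [pow_succ, zpow2, hz3]
lemma zpow4 : Z ^ 4 = Z4 := by rw [show (4:ℕ)=2*2 from rfl, pow_mul, zpow2, pow_two, hz4]
lemma zpow5 : Z ^ 5 = Z5 := by rw [pow_succ, zpow4, hz5]
lemma zpow6 : Z ^ 6 = Z6 := by rw [show (6:ℕ)=4+2 from rfl, pow_add, zpow4, zpow2, hz6]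
lemma zpow7 : Z ^ 7 = Z7 := by rw [pow_succ, zpow6, hz7]
lemma zpow8 : Z ^ 8 = Z8 := by rw [← hz8, ← zpow4, ← pow_add]

noncomputable def A : Matrix (Fin 8) (Fin 8) ℝ :=
  !![1, 1, 1, 1, -1, -1, -1, -1;
     -1, 1, 1, -1, -1, 1, 1, -1;
     -1, -1, 1, 1, 1, 1, -1, -1;
     1, -1, 1, -1, 1, -1, 1, -1;
     1, -1, 1, -1, -1, 1, -1, 1;
     -1, -1, 1, 1, -1, -1, 1, 1;
     -1, 1, 1, -1, 1, -1, -1, 1;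
     1, 1, 1, 1, 1, 1, 1, 1]

noncomputable def phi : Matrix (Fin 8) (Fin 8) ℤ →+* Matrix (Fin 8) (Fin 8) ℝ :=
  (Int.castRingHom ℝ).mapMatrix

lemma hAZ : A = phi Z := by
  ext i j
  fin_cases i <;> fin_cases j <;> norm_num [A, Z, phi]

lemma hApow (k : ℕ) : A ^ k = phi (Z ^ k) := by rw [hAZ, map_pow]

lemma hA8 : A ^ 8 = (-4096 : ℝ) • 1 := by
  rw [hApow, zpow8]
  ext i j
  fin_cases i <;> fin_cases j <;>
    norm_num [Z8, phi, Matrix.one_apply, RingHom.mapMatrix_apply, Matrix.map_apply, Fin.ext_iff]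

noncomputable def cc : ℝ := (Real.sqrt 8)⁻¹
noncomputable def M : Matrix (Fin 8) (Fin 8) ℝ := cc • A

lemma hc2 : cc ^ 2 = (8 : ℝ)⁻¹ := by
  rw [cc, inv_pow, Real.sq_sqrt] ; norm_num

lemma hcne : cc ≠ 0 := by
  rw [cc]
  positivity

lemma hMpow (k : ℕ) : M ^ k = (cc ^ k) • A ^ k := by rw [M, _root_.smul_pow]

lemma hM8 : M ^ 8 = -1 := by
  rw [hMpow, hA8, smul_smul]
  have h8 : cc ^ 8 = ((8:ℝ)⁻¹) ^ 4 := by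
    rw [← hc2, ← pow_mul]
  rw [h8]
  norm_num

lemma hdeg : M.charpoly.natDegree = 8 := by
  rw [Matrix.charpoly_natDegree_eq_dim, Fintype.card_fin]

lemma hc8 : M.charpoly.coeff 8 = 1 := by
  have h := M.charpoly_monic
  rw [Polynomial.Monic, Polynomial.leadingCoeff, hdeg] at h
  exact h

lemma E : ∑ i ∈ Finset.range 9, M.charpoly.coeff i • M ^ i = 0 := by
  have hCH := M.aeval_self_charpoly
  have hp : M.charpoly = ∑ i ∈ Finset.range 9,
      Polynomial.monomial i (M.charpoly.coeff i) :=
    M.charpoly.as_sum_range' 9 (by rw [hdeg]; norm_num)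
  conv at hCH => rw [hp]
  simpa [Polynomial.aeval_monomial, Algebra.smul_def] using hCH

lemma F : (M.charpoly.coeff 0) • (1 : Matrix (Fin 8) (Fin 8) ℝ)
    + (M.charpoly.coeff 1 * cc) • phi Z
    + (M.charpoly.coeff 2 * cc ^ 2) • phi Z2
    + (M.charpoly.coeff 3 * cc ^ 3) • phi Z3
    + (M.charpoly.coeff 4 * cc ^ 4) • phi Z4
    + (M.charpoly.coeff 5 * cc ^ 5) • phi Z5
    + (M.charpoly.coeff 6 * cc ^ 6) • phi Z6
    + (M.charpoly.coeff 7 * cc ^ 7) • phi Z7 = 1 := by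
  have h := E
  rw [Finset.sum_range_succ, Finset.sum_range_succ, Finset.sum_range_succ,
    Finset.sum_range_succ, Finset.sum_range_succ, Finset.sum_range_succ,
    Finset.sum_range_succ, Finset.sum_range_succ, Finset.sum_range_succ,
    Finset.sum_range_zero] at h
  rw [hc8, hM8, one_smul, hMpow 1, hMpow 2, hMpow 3, hMpow 4, hMpow 5, hMpow 6,
    hMpow 7, hApow 1, hApow 2, hApow 3, hApow 4, hApow 5, hApow 6, hApow 7,
    zpow2, zpow3, zpow4, zpow5, zpow6, zpow7, pow_one] at h
  simp only [pow_zero, one_smul, smul_smul, zero_add, pow_one] at h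
  exact eq_of_sub_eq_zero (by rwa [sub_eq_add_neg])

lemma coeffs : M.charpoly.coeff 0 = 1 ∧ M.charpoly.coeff 1 = 0 ∧
    M.charpoly.coeff 2 = 0 ∧ M.charpoly.coeff 3 = 0 ∧ M.charpoly.coeff 4 = 0 ∧
    M.charpoly.coeff 5 = 0 ∧ M.charpoly.coeff 6 = 0 ∧ M.charpoly.coeff 7 = 0 := by
  have e0 := congrFun (congrFun F (0 : Fin 8)) ⟨0, by norm_num⟩
  have e1 := congrFun (congrFun F (0 : Fin 8)) ⟨1, by norm_num⟩
  have e2 := congrFun (congrFun F (0 : Fin 8)) ⟨2, by norm_num⟩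
  have e3 := congrFun (congrFun F (0 : Fin 8)) ⟨3, by norm_num⟩
  have e4 := congrFun (congrFun F (0 : Fin 8)) ⟨4, by norm_num⟩
  have e5 := congrFun (congrFun F (0 : Fin 8)) ⟨5, by norm_num⟩
  have e6 := congrFun (congrFun F (0 : Fin 8)) ⟨6, by norm_num⟩
  have e7 := congrFun (congrFun F (0 : Fin 8)) ⟨7, by norm_num⟩
  simp only [Matrix.add_apply, Matrix.smul_apply, Matrix.one_apply, phi,
    RingHom.mapMatrix_apply, Matrix.map_apply, smul_eq_mul, Z, Z2, Z3, Z4, Z5, Z6, Z7,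
    Fin.ext_iff] at e0 e1 e2 e3 e4 e5 e6 e7
  norm_num at e0 e1 e2 e3 e4 e5 e6 e7
  have hne : ∀ k : ℕ, cc ^ k ≠ 0 := fun k => pow_ne_zero k hcne
  have d1 : M.charpoly.coeff 1 * cc = 0 := by linarith
  have d2 : M.charpoly.coeff 2 * cc ^ 2 = 0 := by linarith
  have d3 : M.charpoly.coeff 3 * cc ^ 3 = 0 := by linarith
  have d4 : M.charpoly.coeff 4 * cc ^ 4 = 0 := by linarith
  have d5 : M.charpoly.coeff 5 * cc ^ 5 = 0 := by linarith
  have d6 : M.charpoly.coeff 6 * cc ^ 6 = 0 := by linarith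
  have d7 : M.charpoly.coeff 7 * cc ^ 7 = 0 := by linarith
  have d0 : M.charpoly.coeff 0 = 1 := by linarith
  refine ⟨d0, ?_, ?_, ?_, ?_, ?_, ?_, ?_⟩
  · rcases mul_eq_zero.mp d1 with h | h
    · exact h
    · exact absurd h hcne
  · exact (mul_eq_zero.mp d2).resolve_right (hne 2)
  · exact (mul_eq_zero.mp d3).resolve_right (hne 3)
  · exact (mul_eq_zero.mp d4).resolve_right (hne 4)
  · exact (mul_eq_zero.mp d5).resolve_right (hne 5)
  · exact (mul_eq_zero.mp d6).resolve_right (hne 6)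
  · exact (mul_eq_zero.mp d7).resolve_right (hne 7)

lemma charpoly_eq : M.charpoly = Polynomial.X ^ 8 + 1 := by
  obtain ⟨h0, h1, h2, h3, h4, h5, h6, h7⟩ := coeffs
  ext n
  by_cases hn : n < 9
  · interval_cases n <;>
      simp [h0, h1, h2, h3, h4, h5, h6, h7, hc8, Polynomial.coeff_X_pow,
        Polynomial.coeff_one]
  · push_neg at hn
    rw [Polynomial.coeff_eq_zero_of_natDegree_lt (by rw [hdeg]; omega)]
    rw [Polynomial.coeff_add, Polynomial.coeff_X_pow, Polynomial.coeff_one]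
    have h8 : n ≠ 8 := by omega
    have h0' : n ≠ 0 := by omega
    simp [h8, h0']

lemma hadamard_entries : ∀ i j, A i j = 1 ∨ A i j = -1 := by
  have hz : ∀ i j, Z i j = 1 ∨ Z i j = -1 := by
    intro i j; fin_cases i <;> fin_cases j <;> decide
  intro i j
  rw [hAZ]
  rcases hz i j with h | h <;>
    simp [phi, RingHom.mapMatrix_apply, Matrix.map_apply, h]

lemma hadamard_prod : A * A.transpose = ((Fintype.card (Fin 8) : ℝ)) • 1 := by
  have h : A * A.transpose = phi (Z * Z.transpose) := by
    rw [hAZ]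
    simp only [phi, RingHom.mapMatrix_apply]
    rw [← Matrix.transpose_map, ← Matrix.map_mul]
  rw [h, hzt]
  ext i j
  simp only [phi, RingHom.mapMatrix_apply, Matrix.map_apply,
    Matrix.diagonal_apply, Matrix.smul_apply, Matrix.one_apply, smul_eq_mul,
    Fintype.card_fin]
  split <;> norm_num

/-- The explicit `8 × 8` matrix `H` below is a real Hadamard matrix of order `8`
and the characteristic polynomial of `8^{-1/2} • H` is `X ^ 8 + 1`; equivalently,
every eigenvalue of `H` is a primitive 16-th root of unity times `√8`. -/
theorem stmt_18 :
    IsHadamard (!![1, 1, 1, 1, -1, -1, -1, -1;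
                   -1, 1, 1, -1, -1, 1, 1, -1;
                   -1, -1, 1, 1, 1, 1, -1, -1;
                   1, -1, 1, -1, 1, -1, 1, -1;
                   1, -1, 1, -1, -1, 1, -1, 1;
                   -1, -1, 1, 1, -1, -1, 1, 1;
                   -1, 1, 1, -1, 1, -1, -1, 1;
                   1, 1, 1, 1, 1, 1, 1, 1] : Matrix (Fin 8) (Fin 8) ℝ) ∧
    Matrix.charpoly
        ((Real.sqrt 8)⁻¹ •
          (!![1, 1, 1, 1, -1, -1, -1, -1;
              -1, 1, 1, -1, -1, 1, 1, -1;
              -1, -1, 1, 1, 1, 1, -1, -1;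
              1, -1, 1, -1, 1, -1, 1, -1;
              1, -1, 1, -1, -1, 1, -1, 1;
              -1, -1, 1, 1, -1, -1, 1, 1;
              -1, 1, 1, -1, 1, -1, -1, 1;
              1, 1, 1, 1, 1, 1, 1, 1] : Matrix (Fin 8) (Fin 8) ℝ)) =
      Polynomial.X ^ 8 + 1 := by
  refine ⟨⟨hadamard_entries, hadamard_prod⟩, charpoly_eq⟩
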